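/- Let m = [v_i; p_i] be an N-optimal presentation of m ∈ Z^d with |r(m)| > C N^{τ_1} and p_1 < C N^{4dτ_0}, where τ_1 = (4d)^{d+1}(τ_0+1) and C N^{4dτ_0} ≤ c N^{τ_1/(4d)}. Then there exists ℓ with 0 < ℓ < d such that m belongs to the good portion [v_i; p_i]_ℓ^g of the codimension-ℓ subspace [v_i; p_i]_ℓ; in particular p_ℓ ≤ c N^{τ_1/(4d)} and |(v, m)| ≥ C max(N^{4dτ_0}, c^{-4d} p_ℓ^{4d}) for all v ∈ B_N \ ⟨v_1,...,v_ℓ⟩. -/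

import Mathlib

/-- Integer inner product on `ℤ^d`. -/
def dotZ {d : ℕ} (v x : Fin d → ℤ) : ℤ := ∑ i, v i * x i

/-- Euclidean norm of an integer vector. -/
noncomputable def enormZ {d : ℕ} (v : Fin d → ℤ) : ℝ :=
  Real.sqrt (∑ i, ((v i : ℝ)) ^ 2)

/-- `v ∈ B_N`: nonzero integer vector of Euclidean norm `< κN`. -/
def inBall (d : ℕ) (κ N : ℝ) (v : Fin d → ℤ) : Prop :=
  v ≠ 0 ∧ enormZ v < κ * N

/-- Lexicographic strict order on integer tuples. -/
def lexLt {ι : Type*} [LT ι] (x y : ι → ℤ) : Prop :=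
  ∃ i, (∀ j, j < i → x j = y j) ∧ x i < y i

/-- The sign-lexicographic order. -/
def slex {ι : Type*} [LT ι] (x y : ι → ℤ) : Prop :=
  lexLt (fun i => |x i|) (fun i => |y i|) ∨ ((∀ i, |x i| = |y i|) ∧ lexLt y x)

/-- The display vector `(p₁,…,p_l; v₁,…,v_l)` of a presentation, used for the
sign-lexicographic comparison of presentations. -/
def presVec (d l : ℕ) (p : ℕ → ℕ) (v : ℕ → Fin d → ℤ) :
    Lex (Fin l ⊕ Lex (Fin l × Fin d)) → ℤ :=
  fun i => Sum.elim (fun a : Fin l => (p a.1 : ℤ))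
    (fun b : Lex (Fin l × Fin d) => v (ofLex b).1.1 (ofLex b).2) (ofLex i)

/-- `(p, v)` is a presentation of `A ⊆ ℤ^d` by `l` independent equations
`(vᵢ, x) = pᵢ` with `vᵢ ∈ B_N`. -/
def IsPresOf (d l : ℕ) (κ N : ℝ) (A : Set (Fin d → ℤ))
    (p : ℕ → ℕ) (v : ℕ → Fin d → ℤ) : Prop :=
  (∀ i < l, inBall d κ N (v i)) ∧
  LinearIndependent ℝ (fun i : Fin l => fun j => ((v i.1 j : ℝ))) ∧
  A = {x | ∀ i < l, dotZ (v i) x = (p i : ℤ)}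

/-- `(p, v)` is the `N`-optimal presentation of `A`: minimal in the
sign-lexicographic order among all presentations. -/
def IsOptPres (d l : ℕ) (κ N : ℝ) (A : Set (Fin d → ℤ))
    (p : ℕ → ℕ) (v : ℕ → Fin d → ℤ) : Prop :=
  IsPresOf d l κ N A p v ∧
  ∀ q w, IsPresOf d l κ N A q w →
    presVec d l p v = presVec d l q w ∨ slex (presVec d l p v) (presVec d l q w)

/-- A presentation (indexed 1-based via `p (i-1)`, so `p_ℓ = p (ℓ - 1)`) has a cut at
`ℓ` for the parameters `(N, θ, μ, τ)`: `p_ℓ < μ N^τ` and `p_{ℓ+1} > θ N^{4dτ}`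
(with the conventions `p₀ = 0`, `p_{d+1} = ∞`). -/
def HasCutAt (d : ℕ) (N θ μ τ : ℝ) (p : ℕ → ℕ) (ℓ : ℕ) : Prop :=
  ℓ ≤ d ∧ (ℓ = 0 ∨ ((p (ℓ - 1) : ℝ)) < μ * N ^ τ) ∧
    (ℓ = d ∨ θ * N ^ (4 * (d : ℝ) * τ) < (p ℓ : ℝ))

/-- The parameters `(N, θ, μ, τ)` are allowable, together with the defining relations
among the fixed constants `τ₀, τ₁, c, C, N₀` of the paper. -/
def Allowable (d n : ℕ) (κ τ0 τ1 cc CC N0 N θ μ τ : ℝ) : Prop :=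
  max ((d : ℝ) ^ 2 + n) 12 < τ0 ∧
  τ1 = (4 * (d : ℝ)) ^ (d + 1) * (τ0 + 1) ∧
  0 < cc ∧ cc ≤ 1 / 2 ∧ 4 ≤ CC ∧
  N0 = (Nat.factorial (d + 1) : ℝ) * κ ^ (d + 1) * CC / cc ∧
  1 ≤ κ ∧ τ0 ≤ τ ∧ τ ≤ τ1 / (4 * d) ∧
  cc < θ ∧ θ < CC ∧ cc < μ ∧ μ < CC ∧ N0 < N

section Helpers
open Finset

lemma enormZ_nonneg {d : ℕ} (v : Fin d → ℤ) : 0 ≤ enormZ v := Real.sqrt_nonneg _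

lemma enormZ_neg {d : ℕ} (v : Fin d → ℤ) : enormZ (-v) = enormZ v := by
  simp [enormZ]

lemma abs_entry_le_enormZ {d : ℕ} (v : Fin d → ℤ) (i : Fin d) :
    |((v i : ℤ) : ℝ)| ≤ enormZ v := by
  rw [enormZ]
  have h : ((v i : ℝ)) ^ 2 ≤ ∑ j, ((v j : ℝ)) ^ 2 :=
    Finset.single_le_sum (f := fun j => ((v j : ℝ)) ^ 2) (fun j _ => by positivity) (mem_univ i)
  calc |((v i : ℤ) : ℝ)| = Real.sqrt (((v i : ℝ)) ^ 2) := (Real.sqrt_sq_eq_abs _).symm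
    _ ≤ _ := Real.sqrt_le_sqrt h

lemma enormZ_eq_norm {d : ℕ} (v : Fin d → ℤ) :
    enormZ v = ‖(WithLp.equiv 2 (Fin d → ℝ)).symm (fun i => ((v i : ℝ)))‖ := by
  rw [EuclideanSpace.norm_eq, enormZ]
  congr 1
  refine Finset.sum_congr rfl fun i _ => ?_
  rw [WithLp.equiv_symm_apply, Real.norm_eq_abs, sq_abs]

lemma enormZ_add_le {d : ℕ} (a b : Fin d → ℤ) : enormZ (a + b) ≤ enormZ a + enormZ b := by
  rw [enormZ_eq_norm, enormZ_eq_norm, enormZ_eq_norm]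
  have : ((WithLp.equiv 2 (Fin d → ℝ)).symm (fun i => ((((a + b) i : ℤ)) : ℝ)))
      = (WithLp.equiv 2 (Fin d → ℝ)).symm (fun i => ((a i : ℝ)))
        + (WithLp.equiv 2 (Fin d → ℝ)).symm (fun i => ((b i : ℝ))) := by
    ext i
    simp [WithLp.equiv_symm_apply]
  rw [this]
  exact norm_add_le _ _

lemma enormZ_le_of_bdd {d : ℕ} (v : Fin d → ℤ) (B : ℝ) (hB0 : 0 ≤ B)
    (hB : ∀ i, |((v i : ℤ) : ℝ)| ≤ B) :
    enormZ v ≤ Real.sqrt d * B := by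
  have h1 : enormZ v ≤ Real.sqrt (d * B ^ 2) := by
    rw [enormZ]
    apply Real.sqrt_le_sqrt
    calc ∑ i, ((v i : ℝ)) ^ 2 ≤ ∑ _i : Fin d, B ^ 2 := by
          refine Finset.sum_le_sum fun i _ => ?_
          calc ((v i : ℝ)) ^ 2 = |((v i : ℝ))| ^ 2 := (sq_abs _).symm
            _ ≤ B ^ 2 := pow_le_pow_left₀ (abs_nonneg _) (hB i) 2
      _ = d * B ^ 2 := by simp [mul_comm]
  calc enormZ v ≤ Real.sqrt (d * B ^ 2) := h1
    _ = Real.sqrt d * B := by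
        rw [Real.sqrt_mul (by positivity), Real.sqrt_sq hB0]

lemma dotZ_neg_left {d : ℕ} (v x : Fin d → ℤ) : dotZ (-v) x = -dotZ v x := by
  simp [dotZ, Finset.sum_neg_distrib]

lemma cast_dotZ {d : ℕ} (v x : Fin d → ℤ) :
    ((dotZ v x : ℤ) : ℝ) = ∑ i, ((v i : ℝ)) * ((x i : ℝ)) := by
  push_cast [dotZ]
  rfl

end Helpers

section Key
open Finset

lemma inBall_neg {d : ℕ} {κ N : ℝ} {v : Fin d → ℤ} (h : inBall d κ N v) : inBall d κ N (-v) :=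
  ⟨neg_ne_zero.mpr h.1, by rw [enormZ_neg]; exact h.2⟩

lemma key_exchange (d : ℕ) (κ N : ℝ) (m : Fin d → ℤ) (pm : ℕ → ℕ) (vm : ℕ → Fin d → ℤ)
    (hm : IsOptPres d d κ N {m} pm vm) (k : ℕ) (hk : k < d)
    (v : Fin d → ℤ) (hv : inBall d κ N v)
    (hvs : (fun j => ((v j : ℤ) : ℝ)) ∉ Submodule.span ℝ
      (Set.range fun i : Fin k => fun j => ((vm i.1 j : ℤ) : ℝ))) :
    (pm k : ℤ) ≤ |dotZ v m| := by
  classical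
  set u : Fin d → (Fin d → ℝ) := fun i => fun j => ((vm i.1 j : ℤ) : ℝ) with hu
  have hLI : LinearIndependent ℝ u := hm.1.2.1
  have hA := hm.1.2.2
  have hmem : ∀ i, i < d → dotZ (vm i) m = (pm i : ℤ) := by
    have h : m ∈ ({m} : Set (Fin d → ℤ)) := rfl
    rw [hA] at h; exact h
  set vR : Fin d → ℝ := fun j => ((v j : ℤ) : ℝ) with hvR
  have hd0 : 0 < d := lt_of_le_of_lt (Nat.zero_le k) hk
  haveI : Nonempty (Fin d) := ⟨⟨0, hd0⟩⟩
  have hcard : Fintype.card (Fin d) = Module.finrank ℝ (Fin d → ℝ) := by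
    simp [Module.finrank_fin_fun]
  set b := basisOfLinearIndependentOfCardEqFinrank hLI hcard with hbdef
  have hb : ⇑b = u := coe_basisOfLinearIndependentOfCardEqFinrank hLI hcard
  -- find pivot index j
  have hex : ∃ j : Fin d, k ≤ j.1 ∧ b.repr vR j ≠ 0 := by
    by_contra hcon
    push_neg at hcon
    apply hvs
    have hsup : ↑(b.repr vR).support ⊆ {i : Fin d | i.1 < k} := by
      intro i hi
      simp only [Finset.coe_sort_coe, Finsupp.mem_support_iff, Finset.mem_coe] at hi
      by_contra h'
      exact hi (hcon i (not_lt.mp (by simpa using h')))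
    have hmemspan := (Module.Basis.mem_span_image b (m := vR) (s := {i : Fin d | i.1 < k})).mpr hsup
    have hset : ⇑b '' {i : Fin d | i.1 < k}
        = Set.range (fun i : Fin k => fun j => ((vm i.1 j : ℤ) : ℝ)) := by
      rw [hb]
      ext x
      constructor
      · rintro ⟨i, hi, rfl⟩
        exact ⟨⟨i.1, hi⟩, rfl⟩
      · rintro ⟨i, rfl⟩
        exact ⟨⟨i.1, lt_trans i.2 hk⟩, i.2, rfl⟩
    rwa [hset] at hmemspan
  obtain ⟨j, hjk, hjne⟩ := hex
  -- replaced family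
  set hfam : Fin d → (Fin d → ℝ) := Function.update u j vR with hhfam
  have hLIh : LinearIndependent ℝ hfam := by
    rw [Fintype.linearIndependent_iff]
    intro g hg
    have hgj : g j = 0 := by
      have h0 := congrArg (b.coord j) hg
      rw [map_sum, map_zero] at h0
      rw [Finset.sum_eq_single j] at h0
      · rw [hhfam] at h0
        rw [Function.update_self] at h0
        rw [map_smul, smul_eq_mul, Module.Basis.coord_apply] at h0
        exact (mul_eq_zero.mp h0).resolve_right hjne
      · intro i _ hij
        rw [map_smul, smul_eq_mul]
        have hz : b.coord j (hfam i) = 0 := by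
          rw [hhfam, Function.update_of_ne hij, ← hb, Module.Basis.coord_apply,
            Module.Basis.repr_self, Finsupp.single_apply, if_neg hij]
        rw [hz, mul_zero]
      · intro h; exact absurd (mem_univ j) h
    intro i
    rcases eq_or_ne i j with rfl | hij
    · exact hgj
    · have hsum : ∑ i', (Function.update g j 0) i' • u i' = 0 := by
        rw [← hg]
        refine Finset.sum_congr rfl fun i' _ => ?_
        rcases eq_or_ne i' j with rfl | h'
        · rw [Function.update_self, hgj, zero_smul, zero_smul]
        · rw [Function.update_of_ne h', hhfam, Function.update_of_ne h']
      have h2 := (Fintype.linearIndependent_iff.mp hLI) _ hsum i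
      rwa [Function.update_of_ne hij] at h2
  -- the permutation on indices
  have hjd : j.1 < d := j.2
  set πv : ℕ → ℕ := fun i => if i < k then i else if i = k then j.1 else if i ≤ j.1 then i - 1 else i
    with hπv
  have hπvlt : ∀ i, i < d → πv i < d := by
    intro i hi
    rw [hπv]
    simp only
    split_ifs <;> omega
  set π : Fin d → Fin d := fun i => ⟨πv i.1, hπvlt i.1 i.2⟩ with hπ
  have hπval : ∀ i : Fin d, (π i).1 = πv i.1 := fun i => rfl
  have hπinj : Function.Injective π := by
    intro a c hac
    have hval : πv a.1 = πv c.1 := congrArg Fin.val hac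
    have ha := a.2
    have hc := c.2
    apply Fin.ext
    rw [hπv] at hval
    simp only at hval
    split_ifs at hval <;> omega
  -- new presentation data
  set base : ℕ → Fin d → ℤ :=
    fun i => if i < d then (if i = k then v else vm (πv i)) else vm i with hbase
  set w : ℕ → Fin d → ℤ := fun i => if 0 ≤ dotZ (base i) m then base i else -(base i) with hw
  set q : ℕ → ℕ := fun i => (dotZ (base i) m).natAbs with hq
  have hdotw : ∀ i, dotZ (w i) m = (q i : ℤ) := by
    intro i
    rw [hw, hq]
    simp only
    split_ifs with h
    · rw [Int.natAbs_of_nonneg h]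
    · rw [dotZ_neg_left]
      have habs : (((dotZ (base i) m).natAbs : ℤ)) = |dotZ (base i) m| :=
        (Int.abs_eq_natAbs _).symm
      rw [habs, abs_of_neg (not_le.mp h)]
  have hcastbase : ∀ i : Fin d, (fun jj => ((base i.1 jj : ℤ) : ℝ)) = hfam (π i) := by
    intro i
    rw [hbase]
    simp only [if_pos i.2]
    rcases eq_or_ne i.1 k with hik | hik
    · rw [if_pos hik]
      have hπij : π i = j := by
        apply Fin.ext
        rw [hπval, hπv]
        simp only
        rw [if_neg (by omega), if_pos hik]
      rw [hπij, hhfam, Function.update_self]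
    · rw [if_neg hik]
      have hπj : π i ≠ j := by
        intro h
        have hval := congrArg Fin.val h
        rw [hπval, hπv] at hval
        simp only at hval
        split_ifs at hval <;> omega
      rw [hhfam, Function.update_of_ne hπj, hu]
  have hLIw : LinearIndependent ℝ (fun i : Fin d => fun jj => ((w i.1 jj : ℤ) : ℝ)) := by
    have h1 : LinearIndependent ℝ (hfam ∘ π) := hLIh.comp π hπinj
    set ε : Fin d → ℝˣ := fun i => if 0 ≤ dotZ (base i.1) m then 1 else -1 with hε
    have h2 := h1.units_smul ε
    have heq : (ε • (hfam ∘ π)) = fun i : Fin d => fun jj => ((w i.1 jj : ℤ) : ℝ) := by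
      funext i
      have hPi : (ε • (hfam ∘ π)) i = ε i • (hfam (π i)) := rfl
      rw [hPi, ← hcastbase i, hε, hw]
      simp only
      split_ifs with h
      · rw [one_smul]
      · funext jj
        push_cast
        simp [Units.smul_def]
    rwa [heq] at h2
  have hpres : IsPresOf d d κ N {m} q w := by
    refine ⟨?_, hLIw, ?_⟩
    · intro i hi
      have hball : inBall d κ N (base i) := by
        rw [hbase]
        simp only [if_pos hi]
        split_ifs
        · exact hv
        · exact hm.1.1 (πv i) (hπvlt i hi)
      rw [hw]
      simp only
      split_ifs
      · exact hball
      · exact inBall_neg hball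
    · ext x
      simp only [Set.mem_singleton_iff, Set.mem_setOf_eq]
      constructor
      · rintro rfl
        intro i hi
        exact hdotw i
      · intro hx
        have hspan : Submodule.span ℝ
            (Set.range (fun i : Fin d => fun jj => ((w i.1 jj : ℤ) : ℝ))) = ⊤ :=
          hLIw.span_eq_top_of_card_eq_finrank (by simp [Module.finrank_fin_fun])
        set y : Fin d → ℝ := fun jj => ((x jj : ℤ) : ℝ) - ((m jj : ℤ) : ℝ) with hy
        set φ : (Fin d → ℝ) →ₗ[ℝ] ℝ := ∑ jj, y jj • LinearMap.proj jj with hφ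
        have hφap : ∀ z : Fin d → ℝ, φ z = ∑ jj, y jj * z jj := by
          intro z
          rw [hφ]
          simp [LinearMap.sum_apply]
        have hker : ∀ i : Fin d, φ (fun jj => ((w i.1 jj : ℤ) : ℝ)) = 0 := by
          intro i
          rw [hφap]
          have h1 : dotZ (w i.1) x = dotZ (w i.1) m := by
            rw [hx i.1 i.2, hdotw i.1]
          have h2 : ((dotZ (w i.1) x : ℤ) : ℝ) = ((dotZ (w i.1) m : ℤ) : ℝ) := by
            exact_mod_cast congrArg (fun t : ℤ => (t : ℝ)) h1
          rw [cast_dotZ, cast_dotZ] at h2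
          have h3 : ∑ jj, ((w i.1 jj : ℤ) : ℝ) * ((x jj : ℤ) : ℝ)
              - ∑ jj, ((w i.1 jj : ℤ) : ℝ) * ((m jj : ℤ) : ℝ) = 0 := by
            rw [h2]; ring
          rw [← Finset.sum_sub_distrib] at h3
          rw [← h3]
          refine Finset.sum_congr rfl fun jj _ => ?_
          rw [hy]
          ring
        have hy0 : φ y = 0 := by
          have hle : Submodule.span ℝ
              (Set.range (fun i : Fin d => fun jj => ((w i.1 jj : ℤ) : ℝ)))
              ≤ LinearMap.ker φ := by
            rw [Submodule.span_le]
            rintro _ ⟨i, rfl⟩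
            exact hker i
          exact hle (hspan ▸ Submodule.mem_top)
        rw [hφap] at hy0
        have hsq : ∑ jj, y jj ^ 2 = 0 := by
          rw [← hy0]
          exact Finset.sum_congr rfl fun jj _ => (sq (y jj)) ▸ rfl
        have hzero : ∀ jj, y jj = 0 := by
          intro jj
          have h5 := (Finset.sum_eq_zero_iff_of_nonneg
            (fun i _ => sq_nonneg (y i))).mp hsq jj (mem_univ jj)
          exact pow_eq_zero_iff two_ne_zero |>.mp h5
        funext jj
        have h6 := hzero jj
        rw [hy] at h6
        simp only at h6
        have h7 : ((x jj : ℤ) : ℝ) = ((m jj : ℤ) : ℝ) := by linarith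
        exact_mod_cast h7
  -- comparison with the optimal presentation
  have hbase_lt : ∀ i, i < k → base i = vm i := by
    intro i hik
    have hid : i < d := lt_trans hik hk
    rw [hbase]
    simp only [if_pos hid, if_neg (by omega : ¬ i = k)]
    congr 1
    rw [hπv]
    simp only
    rw [if_pos hik]
  have hw_lt : ∀ i, i < k → w i = vm i ∧ q i = pm i := by
    intro i hik
    have hid : i < d := lt_trans hik hk
    have h1 : dotZ (base i) m = (pm i : ℤ) := by rw [hbase_lt i hik]; exact hmem i hid
    have h2 : (0 : ℤ) ≤ dotZ (base i) m := by rw [h1]; exact Int.natCast_nonneg _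
    constructor
    · rw [hw]; simp only [if_pos h2]; exact hbase_lt i hik
    · rw [hq]; simp only; rw [h1]; exact Int.natAbs_natCast _
  have hbasek : base k = v := by rw [hbase]; simp [hk]
  have hqk : (q k : ℤ) = |dotZ v m| := by
    rw [hq]
    simp only [hbasek]
    exact (Int.abs_eq_natAbs _).symm
  rw [← hqk]
  by_contra hcon
  push_neg at hcon
  have hqklt : q k < pm k := by exact_mod_cast hcon
  set K : Lex (Fin d ⊕ Lex (Fin d × Fin d)) := toLex (Sum.inl ⟨k, hk⟩) with hK
  have hPK : presVec d d pm vm K = (pm k : ℤ) := rfl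
  have hQK : presVec d d q w K = (q k : ℤ) := rfl
  have hagree : ∀ I : Lex (Fin d ⊕ Lex (Fin d × Fin d)), I < K →
      presVec d d pm vm I = presVec d d q w I := by
    intro I hI
    have hIeq : I = toLex (ofLex I) := rfl
    rcases hcase : (ofLex I) with i | bb
    · rw [hIeq, hcase] at hI ⊢
      have hik : i < (⟨k, hk⟩ : Fin d) := Sum.Lex.inl_lt_inl_iff.mp hI
      have hik' : i.1 < k := hik
      have hwl := hw_lt i.1 hik'
      simp only [presVec, ofLex_toLex, Sum.elim_inl]
      exact_mod_cast congrArg (fun t : ℕ => (t : ℤ)) hwl.2.symm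
    · exfalso
      rw [hIeq, hcase] at hI
      exact Sum.Lex.not_inr_lt_inl hI
  rcases hm.2 q w hpres with heq | hs
  · have h8 := congrFun heq K
    rw [hPK, hQK] at h8
    have : pm k = q k := by exact_mod_cast h8
    omega
  · have habsK : ¬ |presVec d d pm vm K| = |presVec d d q w K| := by
      rw [hPK, hQK]
      rw [abs_of_nonneg (Int.natCast_nonneg _), abs_of_nonneg (Int.natCast_nonneg _)]
      intro h9
      have : pm k = q k := by exact_mod_cast h9
      omega
    rcases hs with ⟨I, hpre, hlt⟩ | ⟨hall, _⟩
    · rcases lt_trichotomy I K with h | h | h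
      · have h10 := hagree I h
        simp only [h10] at hlt
        exact lt_irrefl _ hlt
      · subst h
        have hlt' : |presVec d d pm vm K| < |presVec d d q w K| := hlt
        rw [hPK, hQK] at hlt'
        rw [abs_of_nonneg (Int.natCast_nonneg _), abs_of_nonneg (Int.natCast_nonneg _)] at hlt'
        have : pm k < q k := by exact_mod_cast hlt'
        omega
      · exact habsK (hpre K h)
    · exact habsK (hall K)

end Key

section Cramer
open Finset

lemma pm_mono (d : ℕ) (κ N : ℝ) (m : Fin d → ℤ) (pm : ℕ → ℕ) (vm : ℕ → Fin d → ℤ)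
    (hm : IsOptPres d d κ N {m} pm vm) (k k' : ℕ) (hkk : k ≤ k') (hk' : k' < d) :
    pm k ≤ pm k' := by
  have hk : k < d := lt_of_le_of_lt hkk hk'
  have hLI := hm.1.2.1
  have hv : inBall d κ N (vm k') := hm.1.1 k' hk'
  have hnot : (fun j => ((vm k' j : ℤ) : ℝ)) ∉ Submodule.span ℝ
      (Set.range fun i : Fin k => fun j => ((vm i.1 j : ℤ) : ℝ)) := by
    have h1 : (Set.range fun i : Fin k => fun j => ((vm i.1 j : ℤ) : ℝ))
        = (fun i : Fin d => fun j => ((vm i.1 j : ℤ) : ℝ)) '' {i : Fin d | i.1 < k} := by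
      ext x
      constructor
      · rintro ⟨i, rfl⟩
        exact ⟨⟨i.1, lt_trans i.2 hk⟩, i.2, rfl⟩
      · rintro ⟨i, hi, rfl⟩
        exact ⟨⟨i.1, hi⟩, rfl⟩
    rw [h1]
    exact hLI.notMem_span_image (s := {i : Fin d | i.1 < k}) (x := ⟨k', hk'⟩)
      (by simp only [Set.mem_setOf_eq]; omega)
  have h2 := key_exchange d κ N m pm vm hm k hk (vm k') hv hnot
  have hmm : m ∈ ({m} : Set (Fin d → ℤ)) := rfl
  rw [hm.1.2.2] at hmm
  rw [hmm k' hk', abs_of_nonneg (Int.natCast_nonneg _)] at h2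
  exact_mod_cast h2

lemma det_bound {d : ℕ} (A : Matrix (Fin d) (Fin d) ℝ) (K : ℝ)
    (h : ∀ i j, |A i j| ≤ K) : |A.det| ≤ (Nat.factorial d : ℝ) * K ^ d := by
  have hK : 0 ≤ K ∨ d = 0 := by
    rcases Nat.eq_zero_or_pos d with h0 | h0
    · exact Or.inr h0
    · exact Or.inl (le_trans (abs_nonneg _) (h ⟨0, h0⟩ ⟨0, h0⟩))
  rcases hK with hK | hK
  swap
  · subst hK
    simp [Matrix.det_fin_zero, Nat.factorial]
  rw [Matrix.det_apply']
  calc |∑ σ : Equiv.Perm (Fin d), ((Equiv.Perm.sign σ : ℤ) : ℝ) * ∏ i, A (σ i) i|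
      ≤ ∑ σ : Equiv.Perm (Fin d), |((Equiv.Perm.sign σ : ℤ) : ℝ) * ∏ i, A (σ i) i| :=
        Finset.abs_sum_le_sum_abs _ _
    _ ≤ ∑ _σ : Equiv.Perm (Fin d), K ^ d := by
        refine Finset.sum_le_sum fun σ _ => ?_
        rw [abs_mul]
        have hsign : |((Equiv.Perm.sign σ : ℤ) : ℝ)| = 1 := by
          rcases Int.units_eq_one_or (Equiv.Perm.sign σ) with h1 | h1 <;> rw [h1] <;> norm_num
        rw [hsign, one_mul, Finset.abs_prod]
        calc ∏ i, |A (σ i) i| ≤ ∏ _i : Fin d, K :=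
              Finset.prod_le_prod (fun _ _ => abs_nonneg _) (fun i _ => h _ _)
          _ = K ^ d := by simp
    _ = (Nat.factorial d : ℝ) * K ^ d := by
        rw [Finset.sum_const, card_univ, Fintype.card_perm, nsmul_eq_mul]
        simp

lemma cramer_bound {d : ℕ} (κ N : ℝ) (hκN : 1 ≤ κ * N)
    (m : Fin d → ℤ) (pm : ℕ → ℕ) (vm : ℕ → Fin d → ℤ)
    (hball : ∀ i < d, inBall d κ N (vm i))
    (hLI : LinearIndependent ℝ (fun i : Fin d => fun j => ((vm i.1 j : ℤ) : ℝ)))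
    (hmem : ∀ i < d, dotZ (vm i) m = (pm i : ℤ))
    (P : ℝ) (hP : ∀ i, i < d → (pm i : ℝ) ≤ P) :
    ∀ jj : Fin d, |((m jj : ℤ) : ℝ)| ≤ (d : ℝ) * (Nat.factorial d : ℝ) * (κ * N) ^ d * P := by
  classical
  intro jj
  set M : Matrix (Fin d) (Fin d) ℤ := Matrix.of (fun i j => vm i.1 j) with hM
  set A : Matrix (Fin d) (Fin d) ℝ := (Int.castRingHom ℝ).mapMatrix M with hA
  have hAapp : ∀ i j, A i j = ((vm i.1 j : ℤ) : ℝ) := fun i j => rfl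
  have hrows : LinearIndependent ℝ (fun i : Fin d => A i) := hLI
  have hunit : IsUnit A := Matrix.linearIndependent_rows_iff_isUnit.mp hrows
  have hdetA : IsUnit A.det := (Matrix.isUnit_iff_isUnit_det A).mp hunit
  have hAdetM : A.det = ((M.det : ℤ) : ℝ) := by
    rw [hA, ← RingHom.map_det]
    rfl
  have hMdet : M.det ≠ 0 := by
    intro h0
    rw [hAdetM, h0] at hdetA
    simp at hdetA
  have hdet1 : (1 : ℝ) ≤ |A.det| := by
    rw [hAdetM]
    have : (1 : ℤ) ≤ |M.det| := Int.one_le_abs hMdet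
    calc (1:ℝ) ≤ ((|M.det| : ℤ) : ℝ) := by exact_mod_cast this
      _ = |((M.det : ℤ) : ℝ)| := by push_cast; ring
  have hmul : A.mulVec (fun j => ((m j : ℤ) : ℝ)) = fun i : Fin d => ((pm i.1 : ℕ) : ℝ) := by
    funext i
    have : (A.mulVec (fun j => ((m j : ℤ) : ℝ))) i = ∑ j, ((vm i.1 j : ℤ) : ℝ) * ((m j : ℤ) : ℝ) := by
      simp [Matrix.mulVec, dotProduct, hAapp]
    rw [this, ← cast_dotZ, hmem i.1 i.2]
    push_cast
    ring
  have hkey : A.det • (fun j => ((m j : ℤ) : ℝ)) = A.adjugate.mulVec (fun i : Fin d => ((pm i.1 : ℕ) : ℝ)) := by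
    rw [← hmul, Matrix.mulVec_mulVec, Matrix.adjugate_mul, Matrix.smul_mulVec,
      Matrix.one_mulVec]
  have hadj : ∀ i : Fin d, |A.adjugate jj i| ≤ (Nat.factorial d : ℝ) * (κ * N) ^ d := by
    intro i
    rw [Matrix.adjugate_apply]
    apply det_bound
    intro i' j'
    rcases eq_or_ne i' i with rfl | hne
    · rw [Matrix.updateRow_self]
      rw [Pi.single_apply]
      split_ifs <;> simp <;> linarith
    · rw [Matrix.updateRow_ne hne]
      have h1 := abs_entry_le_enormZ (vm i'.1) j'
      have h2 := (hball i'.1 i'.2).2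
      calc |A i' j'| ≤ enormZ (vm i'.1) := h1
        _ ≤ κ * N := le_of_lt h2
  have hP0 : 0 ≤ P := le_trans (Nat.cast_nonneg _) (hP jj.1 jj.2)
  have hcoord := congrFun hkey jj
  have hcval : A.det * ((m jj : ℤ) : ℝ) = ∑ i, A.adjugate jj i * ((pm i.1 : ℕ) : ℝ) := by
    have := hcoord
    simp only [Pi.smul_apply, smul_eq_mul] at this
    rw [this]
    simp [Matrix.mulVec, dotProduct]
  have hsum : |∑ i, A.adjugate jj i * ((pm i.1 : ℕ) : ℝ)|
      ≤ (d : ℝ) * (Nat.factorial d : ℝ) * (κ * N) ^ d * P := by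
    calc |∑ i, A.adjugate jj i * ((pm i.1 : ℕ) : ℝ)|
        ≤ ∑ i, |A.adjugate jj i * ((pm i.1 : ℕ) : ℝ)| := Finset.abs_sum_le_sum_abs _ _
      _ ≤ ∑ _i : Fin d, (Nat.factorial d : ℝ) * (κ * N) ^ d * P := by
          refine Finset.sum_le_sum fun i _ => ?_
          rw [abs_mul]
          have h3 : |((pm i.1 : ℕ) : ℝ)| ≤ P := by
            rw [abs_of_nonneg (Nat.cast_nonneg _)]
            exact hP i.1 i.2
          have h4 := hadj i
          have h5 : (0:ℝ) ≤ |((pm i.1 : ℕ) : ℝ)| := abs_nonneg _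
          have h6 : (0:ℝ) ≤ |A.adjugate jj i| := abs_nonneg _
          nlinarith
      _ = (d : ℝ) * (Nat.factorial d : ℝ) * (κ * N) ^ d * P := by
          rw [Finset.sum_const, card_univ, Fintype.card_fin, nsmul_eq_mul]
          ring
  calc |((m jj : ℤ) : ℝ)| ≤ |A.det| * |((m jj : ℤ) : ℝ)| := by
        nlinarith [abs_nonneg (((m jj : ℤ) : ℝ))]
    _ = |A.det * ((m jj : ℤ) : ℝ)| := (abs_mul _ _).symm
    _ ≤ _ := by rw [hcval]; exact hsum

end Cramer

set_option maxHeartbeats 2000000 in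
/-- a point `m` with `|r(m)| > C N^{τ₁}` and `p₁ < C N^{4dτ₀}` in its
`N`-optimal presentation belongs to the good portion `[v;p]_ℓ^g` of the
codimension-`ℓ` subspace `[v;p]_ℓ` for some `0 < ℓ < d`: in particular
`p_ℓ ≤ c N^{τ₁/(4d)}` and `|(v, m)| ≥ C max(N^{4dτ₀}, c^{-4d} p_ℓ^{4d})` for all
`v ∈ B_N \ ⟨v₁,…,v_ℓ⟩`. -/
theorem statement15 (d n : ℕ) (κ τ0 τ1 cc CC N0 N : ℝ)
    (hτ0 : max ((d : ℝ) ^ 2 + n) 12 < τ0)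
    (hτ1 : τ1 = (4 * (d : ℝ)) ^ (d + 1) * (τ0 + 1))
    (hcc0 : 0 < cc) (hcc : cc ≤ 1 / 2) (hCC : 4 ≤ CC)
    (hN0 : N0 = (Nat.factorial (d + 1) : ℝ) * κ ^ (d + 1) * CC / cc)
    (hκ : 1 ≤ κ) (hN : N0 < N)
    (hcomp : CC * N ^ (4 * (d : ℝ) * τ0) ≤ cc * N ^ (τ1 / (4 * (d : ℝ))))
    (rt : (Fin d → ℤ) → (Fin d → ℤ))
    (hrt : ∀ x, enormZ (x - rt x) ≤ (d : ℝ) * κ)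
    (m : Fin d → ℤ) (pm : ℕ → ℕ) (vm : ℕ → Fin d → ℤ)
    (hm : IsOptPres d d κ N {m} pm vm)
    (hroot : CC * N ^ τ1 < enormZ (rt m))
    (hp1 : (pm 0 : ℝ) < CC * N ^ (4 * (d : ℝ) * τ0)) :
    ∃ ℓ : ℕ, 0 < ℓ ∧ ℓ < d ∧
      ((pm (ℓ - 1) : ℝ) ≤ cc * N ^ (τ1 / (4 * (d : ℝ)))) ∧
      ∀ v : Fin d → ℤ, inBall d κ N v →
        (fun j => ((v j : ℝ))) ∉
          Submodule.span ℝ (Set.range fun i : Fin ℓ => fun j => ((vm i.1 j : ℝ))) →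
        CC * max (N ^ (4 * (d : ℝ) * τ0))
            (cc ^ (-(4 * (d : ℝ))) * ((pm (ℓ - 1) : ℝ)) ^ (4 * d))
          ≤ |((dotZ v m : ℤ) : ℝ)| := by
  -- basic positivity facts
  have hCC0 : (0:ℝ) < CC := by linarith
  have hfact1 : (1:ℝ) ≤ (Nat.factorial (d + 1) : ℝ) := by
    exact_mod_cast Nat.one_le_iff_ne_zero.mpr (Nat.factorial_ne_zero (d+1))
  have hκp : (1:ℝ) ≤ κ ^ (d + 1) := one_le_pow₀ hκ
  have h8 : 8 ≤ CC / cc := by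
    rw [le_div_iff₀ hcc0]
    linarith
  have hN0e : N0 = ((Nat.factorial (d + 1) : ℝ) * κ ^ (d + 1)) * (CC / cc) := by
    rw [hN0]; ring
  have h9 : (1:ℝ) ≤ (Nat.factorial (d + 1) : ℝ) * κ ^ (d + 1) := by nlinarith
  have h8pos : (0:ℝ) ≤ CC / cc := by positivity
  have hN0_8 : 8 ≤ N0 := by rw [hN0e]; nlinarith
  have hN0pos : 0 < N0 := by linarith
  have hNpos : (0:ℝ) < N := by linarith
  have hN1 : (1:ℝ) < N := by linarith
  have hN2 : (2:ℝ) ≤ N := by linarith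
  have hCN : CC / cc ≤ N := by
    have h10 : CC / cc ≤ N0 := by rw [hN0e]; nlinarith
    linarith
  have hccN : CC ≤ cc * N := by
    rw [div_le_iff₀ hcc0] at hCN
    linarith [hCN]
  have hτ012 : (12:ℝ) < τ0 := lt_of_le_of_lt (le_max_right _ _) hτ0
  -- d is positive
  have hd0 : 0 < d := by
    by_contra h
    push_neg at h
    have hd : d = 0 := Nat.le_zero.mp h
    subst hd
    have h1 : enormZ (rt m) = 0 := by simp [enormZ]
    have h2 : (0:ℝ) < CC * N ^ τ1 := by positivity
    linarith
  have hdR : (1:ℝ) ≤ (d:ℝ) := by exact_mod_cast hd0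
  have h4d1 : (1:ℝ) ≤ 4 * (d:ℝ) := by linarith
  have h4d0 : (4 * (d:ℝ)) ≠ 0 := by positivity
  have hτ14 : τ1 / (4 * (d:ℝ)) = (4 * (d:ℝ)) ^ d * (τ0 + 1) := by
    rw [hτ1, pow_succ]
    field_simp
  have hκN1 : (1:ℝ) ≤ κ * N := by
    calc (1:ℝ) = 1 * 1 := by norm_num
      _ ≤ κ * N := mul_le_mul hκ (by linarith) (by norm_num) (by linarith)
  -- the exponent sequence
  set t : ℕ → ℝ := fun j => (4 * (d:ℝ)) ^ (j + 1) * (τ0 + 1) - 4 * (d:ℝ) with ht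
  have t0eq : t 0 = 4 * (d:ℝ) * τ0 := by rw [ht]; simp [pow_one]; ring
  have tmono : ∀ a b : ℕ, a ≤ b → t a ≤ t b := by
    intro a b hab
    rw [ht]
    simp only
    have hp : (4 * (d:ℝ)) ^ (a + 1) ≤ (4 * (d:ℝ)) ^ (b + 1) :=
      pow_le_pow_right₀ h4d1 (by omega)
    have hp2 := mul_le_mul_of_nonneg_right hp (by linarith : (0:ℝ) ≤ τ0 + 1)
    linarith
  -- membership facts
  have hmemm : ∀ i, i < d → dotZ (vm i) m = (pm i : ℤ) := by
    have h : m ∈ ({m} : Set (Fin d → ℤ)) := rfl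
    rw [hm.1.2.2] at h
    exact h
  -- key arithmetic inequalities
  have hAR1 : ∀ jj : ℕ, jj < d → CC * N ^ (t jj) ≤ cc * N ^ (τ1 / (4 * (d:ℝ))) := by
    intro jj hjj
    have hexp : 1 + t jj ≤ τ1 / (4 * (d:ℝ)) := by
      rw [hτ14, ht]
      simp only
      have hp : (4 * (d:ℝ)) ^ (jj + 1) ≤ (4 * (d:ℝ)) ^ d :=
        pow_le_pow_right₀ h4d1 (by omega)
      have hp2 := mul_le_mul_of_nonneg_right hp (by linarith : (0:ℝ) ≤ τ0 + 1)
      linarith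
    have h0 : (0:ℝ) ≤ N ^ (t jj) := le_of_lt (Real.rpow_pos_of_pos hNpos _)
    calc CC * N ^ (t jj) ≤ (cc * N) * N ^ (t jj) :=
        mul_le_mul_of_nonneg_right hccN h0
      _ = cc * N ^ (1 + t jj) := by rw [Real.rpow_add hNpos, Real.rpow_one]; ring
      _ ≤ cc * N ^ (τ1 / (4 * (d:ℝ))) :=
          mul_le_mul_of_nonneg_left
            (Real.rpow_le_rpow_of_exponent_le (le_of_lt hN1) hexp) (le_of_lt hcc0)
  have hAR2 : ∀ jj : ℕ, jj + 1 < d → (pm jj : ℝ) ≤ CC * N ^ (t jj) →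
      CC * max (N ^ (4 * (d:ℝ) * τ0)) (cc ^ (-(4 * (d:ℝ))) * ((pm jj : ℝ)) ^ (4 * d))
        ≤ CC * N ^ (t (jj + 1)) := by
    intro jj hjj hpj
    have hmax : max (N ^ (4 * (d:ℝ) * τ0)) (cc ^ (-(4 * (d:ℝ))) * ((pm jj : ℝ)) ^ (4 * d))
        ≤ N ^ (t (jj + 1)) := by
      apply max_le
      · rw [← t0eq]
        exact Real.rpow_le_rpow_of_exponent_le (le_of_lt hN1) (tmono 0 (jj+1) (by omega))
      · -- second component
        have hNt0 : (0:ℝ) ≤ N ^ (t jj) := le_of_lt (Real.rpow_pos_of_pos hNpos _)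
        have h1 : ((pm jj : ℝ)) ^ (4 * d) ≤ (CC * N ^ (t jj)) ^ (4 * d) :=
          pow_le_pow_left₀ (Nat.cast_nonneg _) hpj _
        have hccE : cc ^ (-(4 * (d:ℝ))) = (cc ^ (4 * d : ℕ))⁻¹ := by
          rw [Real.rpow_neg (le_of_lt hcc0)]
          congr 1
          rw [← Real.rpow_natCast cc (4 * d)]
          congr 1
          push_cast
          ring
        have hNE : (N ^ (t jj)) ^ (4 * d : ℕ) = N ^ (t jj * (4 * d : ℕ)) := by
          rw [Real.rpow_mul (le_of_lt hNpos), Real.rpow_natCast]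
        have hCcc : ((CC / cc) : ℝ) ^ (4 * d : ℕ) ≤ N ^ (4 * d : ℕ) :=
          pow_le_pow_left₀ (by positivity) hCN _
        have hexp2 : ((4 * d : ℕ) : ℝ) + t jj * (4 * d : ℕ) ≤ t (jj + 1) := by
          rw [ht]
          simp only
          have hps : (4 * (d:ℝ)) ^ (jj + 1 + 1) = (4 * (d:ℝ)) ^ (jj + 1) * (4 * (d:ℝ)) :=
            pow_succ _ _
          have hX : (1:ℝ) ≤ (4 * (d:ℝ)) ^ (jj + 1) := one_le_pow₀ h4d1
          push_cast
          rw [hps]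
          have hq : (0:ℝ) ≤ 16 * (d:ℝ)^2 - 8*(d:ℝ) := by nlinarith [hdR]
          nlinarith [hq]
        calc cc ^ (-(4 * (d:ℝ))) * ((pm jj : ℝ)) ^ (4 * d)
            ≤ cc ^ (-(4 * (d:ℝ))) * (CC * N ^ (t jj)) ^ (4 * d) :=
              mul_le_mul_of_nonneg_left h1
                (le_of_lt (Real.rpow_pos_of_pos hcc0 _))
          _ = (CC / cc) ^ (4 * d : ℕ) * (N ^ (t jj)) ^ (4 * d : ℕ) := by
              rw [hccE, mul_pow, div_pow]
              field_simp
          _ ≤ N ^ (4 * d : ℕ) * (N ^ (t jj)) ^ (4 * d : ℕ) :=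
              mul_le_mul_of_nonneg_right hCcc (by positivity)
          _ = N ^ (((4 * d : ℕ) : ℝ) + t jj * (4 * d : ℕ)) := by
              rw [hNE, ← Real.rpow_natCast N (4 * d), ← Real.rpow_add hNpos]
          _ ≤ N ^ (t (jj + 1)) :=
              Real.rpow_le_rpow_of_exponent_le (le_of_lt hN1) hexp2
    exact mul_le_mul_of_nonneg_left hmax (le_of_lt hCC0)
  -- main contradiction setup
  by_contra hcontra
  push_neg at hcontra
  -- inductive bound on the pm's
  have hclaim : ∀ jj, jj < d → (pm jj : ℝ) ≤ CC * N ^ (t jj) := by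
    intro jj
    induction jj with
    | zero => intro _; rw [t0eq]; exact le_of_lt hp1
    | succ j ih =>
      intro hjd
      have hjd' : j < d := by omega
      have hpj := ih hjd'
      have hcond1 : (pm j : ℝ) ≤ cc * N ^ (τ1 / (4 * (d:ℝ))) := le_trans hpj (hAR1 j hjd')
      obtain ⟨v, hvball, hvspan, hvlt⟩ :=
        hcontra (j + 1) (Nat.succ_pos j) hjd (by simpa using hcond1)
      have hkey := key_exchange d κ N m pm vm hm (j + 1) hjd v hvball hvspan
      have h1 : (pm (j + 1) : ℝ) ≤ |((dotZ v m : ℤ) : ℝ)| := by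
        have h2 : ((pm (j + 1) : ℤ) : ℝ) ≤ ((|dotZ v m| : ℤ) : ℝ) := by exact_mod_cast hkey
        rw [Int.cast_abs] at h2
        exact_mod_cast h2
      have h3 : |((dotZ v m : ℤ) : ℝ)| < CC * max (N ^ (4 * (d:ℝ) * τ0))
          (cc ^ (-(4 * (d:ℝ))) * ((pm j : ℝ)) ^ (4 * d)) := by simpa using hvlt
      apply le_of_lt
      calc (pm (j + 1) : ℝ) ≤ |((dotZ v m : ℤ) : ℝ)| := h1
        _ < CC * max (N ^ (4 * (d:ℝ) * τ0))
            (cc ^ (-(4 * (d:ℝ))) * ((pm j : ℝ)) ^ (4 * d)) := h3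
        _ ≤ CC * N ^ (t (j + 1)) := hAR2 j hjd hpj
  -- all pm's are bounded; apply Cramer
  set T : ℝ := t (d - 1) with hT
  have hPT : ∀ i, i < d → (pm i : ℝ) ≤ CC * N ^ T := by
    intro i hi
    refine le_trans (hclaim i hi) ?_
    exact mul_le_mul_of_nonneg_left
      (Real.rpow_le_rpow_of_exponent_le (le_of_lt hN1) (tmono i (d - 1) (by omega)))
      (le_of_lt hCC0)
  have hcb := cramer_bound κ N hκN1 m pm vm hm.1.1 hm.1.2.1 hmemm (CC * N ^ T) hPT
  set B : ℝ := (d : ℝ) * (Nat.factorial d : ℝ) * (κ * N) ^ d * (CC * N ^ T) with hB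
  have hB0 : 0 ≤ B := by
    rw [hB]
    have : (0:ℝ) < N ^ T := Real.rpow_pos_of_pos hNpos _
    positivity
  have hEm : enormZ m ≤ Real.sqrt d * B := enormZ_le_of_bdd m B hB0 hcb
  have hrtm : enormZ (rt m) ≤ enormZ m + (d:ℝ) * κ := by
    have h1 : rt m = m + -(m - rt m) := by abel
    calc enormZ (rt m) = enormZ (m + -(m - rt m)) := by rw [← h1]
      _ ≤ enormZ m + enormZ (-(m - rt m)) := enormZ_add_le _ _
      _ = enormZ m + enormZ (m - rt m) := by rw [enormZ_neg]
      _ ≤ enormZ m + (d:ℝ) * κ := by linarith [hrt m]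
  -- numeric bounds
  have hsd : Real.sqrt d ≤ (d:ℝ) := by
    calc Real.sqrt d ≤ Real.sqrt ((d:ℝ) ^ 2) := Real.sqrt_le_sqrt (by nlinarith [hdR])
      _ = (d:ℝ) := Real.sqrt_sq (by positivity)
  have hdN0 : (d:ℝ) ≤ N0 := by
    have h1 : (d:ℝ) ≤ (Nat.factorial (d + 1) : ℝ) := by
      have := Nat.self_le_factorial (d + 1)
      have h2 : (d + 1 : ℝ) ≤ (Nat.factorial (d + 1) : ℝ) := by exact_mod_cast this
      linarith
    have h3 : (Nat.factorial (d + 1) : ℝ) ≤ (Nat.factorial (d + 1) : ℝ) * κ ^ (d + 1) :=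
      le_mul_of_one_le_right (by positivity) hκp
    have h4 : (Nat.factorial (d + 1) : ℝ) * κ ^ (d + 1)
        ≤ ((Nat.factorial (d + 1) : ℝ) * κ ^ (d + 1)) * (CC / cc) :=
      le_mul_of_one_le_right (by positivity) (by linarith)
    rw [hN0e]
    linarith
  have hdN : (d:ℝ) ≤ N := by linarith
  have hfactN : (Nat.factorial d : ℝ) * κ ^ d * CC ≤ N := by
    have hfd : ((d + 1).factorial : ℝ) = (d + 1) * (Nat.factorial d : ℝ) := by
      exact_mod_cast Nat.factorial_succ d
    have hf0 : (1:ℝ) ≤ (Nat.factorial d : ℝ) := by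
      exact_mod_cast Nat.one_le_iff_ne_zero.mpr (Nat.factorial_ne_zero d)
    have hκd : κ ^ d ≤ κ ^ (d + 1) := pow_le_pow_right₀ hκ (by omega)
    have hκd0 : (0:ℝ) < κ ^ d := by positivity
    have h1 : (Nat.factorial d : ℝ) * κ ^ d * CC ≤ ((d+1).factorial : ℝ) * κ ^ (d+1) * CC := by
      have h5 : (Nat.factorial d : ℝ) ≤ ((d+1).factorial : ℝ) := by
        rw [hfd]
        have : (1:ℝ) ≤ (d:ℝ) + 1 := by linarith
        nlinarith [hf0]
      apply mul_le_mul_of_nonneg_right _ (by linarith : (0:ℝ) ≤ CC)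
      exact mul_le_mul h5 hκd (by positivity) (by positivity)
    have h2 : ((d+1).factorial : ℝ) * κ ^ (d+1) * CC = N0 * cc := by
      rw [hN0]; field_simp
    have h6 : N0 * cc ≤ N0 * 1 := by
      apply mul_le_mul_of_nonneg_left _ (le_of_lt hN0pos)
      linarith
    linarith
  have hκN0 : (0:ℝ) < κ * N := by linarith
  have hNT0 : (0:ℝ) < N ^ T := Real.rpow_pos_of_pos hNpos _
  -- √d * B ≤ N^(3 + d + T)
  have hsB : Real.sqrt d * B ≤ N ^ ((3:ℝ) + (d:ℕ) + T) := by
    have hBexp : B = ((d:ℝ) * (Nat.factorial d : ℝ) * κ ^ d * CC) * (N ^ (d:ℕ) * N ^ T) := by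
      rw [hB, mul_pow]
      ring
    have f1 : Real.sqrt d * ((d:ℝ) * (Nat.factorial d : ℝ) * κ ^ d * CC) ≤ N * (N * N) := by
      have h1 : Real.sqrt d * (d:ℝ) ≤ N * N :=
        mul_le_mul (le_trans hsd hdN) hdN (by positivity) (by positivity)
      have h2 : (0:ℝ) ≤ (Nat.factorial d : ℝ) * κ ^ d * CC := by positivity
      calc Real.sqrt d * ((d:ℝ) * (Nat.factorial d : ℝ) * κ ^ d * CC)
          = (Real.sqrt d * (d:ℝ)) * ((Nat.factorial d : ℝ) * κ ^ d * CC) := by ring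
        _ ≤ (N * N) * N := by
            apply mul_le_mul h1 hfactN h2
            positivity
        _ = N * (N * N) := by ring
    have f2 : Real.sqrt d * B ≤ (N * (N * N)) * (N ^ (d:ℕ) * N ^ T) := by
      rw [hBexp]
      have h3 : (0:ℝ) ≤ N ^ (d:ℕ) * N ^ T := by positivity
      have h4 : (0:ℝ) ≤ Real.sqrt d * ((d:ℝ) * (Nat.factorial d : ℝ) * κ ^ d * CC) := by
        positivity
      calc Real.sqrt d * (((d:ℝ) * (Nat.factorial d : ℝ) * κ ^ d * CC) * (N ^ (d:ℕ) * N ^ T))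
          = (Real.sqrt d * ((d:ℝ) * (Nat.factorial d : ℝ) * κ ^ d * CC)) * (N ^ (d:ℕ) * N ^ T) := by
            ring
        _ ≤ (N * (N * N)) * (N ^ (d:ℕ) * N ^ T) :=
            mul_le_mul_of_nonneg_right f1 h3
    have hrw : (N * (N * N)) * (N ^ (d:ℕ) * N ^ T) = N ^ ((3:ℝ) + (d:ℕ) + T) := by
      rw [Real.rpow_add hNpos, Real.rpow_add hNpos, ← Real.rpow_natCast N d]
      have h5 : N ^ (3:ℝ) = N * (N * N) := by
        rw [show (3:ℝ) = ((3:ℕ):ℝ) by norm_num, Real.rpow_natCast]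
        ring
      rw [h5]
      ring
    rw [← hrw]
    exact f2
  -- exponent comparison
  have hX1 : (1:ℝ) ≤ (4 * (d:ℝ)) ^ d := one_le_pow₀ h4d1
  have hexp3 : (3:ℝ) + (d:ℕ) + T ≤ τ1 - 1 := by
    rw [hT, ht, hτ1]
    simp only
    have hps : (4 * (d:ℝ)) ^ (d + 1) = (4 * (d:ℝ)) ^ d * (4 * (d:ℝ)) := pow_succ _ _
    have hd1 : (d - 1) + 1 = d := by omega
    rw [hd1]
    push_cast
    rw [hps]
    have hY : (13:ℝ) ≤ (4 * (d:ℝ)) ^ d * (τ0 + 1) := by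
      calc (13:ℝ) = 1 * 13 := by norm_num
        _ ≤ (4 * (d:ℝ)) ^ d * (τ0 + 1) :=
          mul_le_mul hX1 (by linarith) (by norm_num) (by positivity)
    nlinarith [hY, hdR,
      mul_le_mul_of_nonneg_right hY (by linarith : (0:ℝ) ≤ 4 * (d:ℝ) - 1)]
  have hτ1big : (2:ℝ) ≤ τ1 - 1 := by
    rw [hτ1]
    have h44 : (4:ℝ) ^ (d+1) ≤ (4 * (d:ℝ)) ^ (d + 1) := by
      apply pow_le_pow_left₀ (by norm_num)
      linarith
    have h16 : (16:ℝ) ≤ (4:ℝ) ^ (d + 1) := by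
      calc (16:ℝ) = 4 ^ 2 := by norm_num
        _ ≤ 4 ^ (d + 1) := pow_le_pow_right₀ (by norm_num) (by omega)
    have h17 : (16:ℝ) * 13 ≤ (4 * (d:ℝ)) ^ (d + 1) * (τ0 + 1) :=
      mul_le_mul (le_trans h16 h44) (by clear * - hτ012; linarith) (by norm_num)
        (by positivity)
    clear * - h17
    linarith
  have hfin1 : Real.sqrt d * B ≤ N ^ (τ1 - 1) :=
    le_trans hsB (Real.rpow_le_rpow_of_exponent_le (le_of_lt hN1) hexp3)
  have hdκN : (d:ℝ) * κ ≤ N ^ (τ1 - 1) := by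
    have h1 : (d:ℝ) * κ ≤ N0 := by
      have h2 : κ ≤ κ ^ (d + 1) := le_self_pow₀ hκ (by omega)
      have h2' : (d:ℝ) ≤ (Nat.factorial (d + 1) : ℝ) := by
        have := Nat.self_le_factorial (d + 1)
        have h2'' : (d + 1 : ℝ) ≤ (Nat.factorial (d + 1) : ℝ) := by exact_mod_cast this
        linarith
      have h2a : (d:ℝ) * κ ≤ (Nat.factorial (d + 1) : ℝ) * κ ^ (d + 1) :=
        mul_le_mul h2' h2 (by linarith) (by positivity)
      have h2b : (Nat.factorial (d + 1) : ℝ) * κ ^ (d + 1)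
          ≤ ((Nat.factorial (d + 1) : ℝ) * κ ^ (d + 1)) * (CC / cc) :=
        le_mul_of_one_le_right (by positivity) (by linarith)
      rw [hN0e]
      exact le_trans h2a h2b
    have h3 : (d:ℝ) * κ ≤ N := le_trans h1 (le_of_lt hN)
    have hτ11 : (1:ℝ) ≤ τ1 - 1 := by clear * - hτ1big; linarith
    have h4 : N ^ (1:ℝ) ≤ N ^ (τ1 - 1) :=
      Real.rpow_le_rpow_of_exponent_le (le_of_lt hN1) hτ11
    rw [Real.rpow_one] at h4
    exact le_trans h3 h4
  have hsum2 : (2:ℝ) * N ^ (τ1 - 1) ≤ CC * N ^ τ1 := by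
    have h1 : N ^ τ1 = N * N ^ (τ1 - 1) := by
      have h1a : N ^ (1:ℝ) * N ^ (τ1 - 1) = N ^ τ1 := by
        rw [← Real.rpow_add hNpos]
        norm_num
      rw [← h1a, Real.rpow_one]
    have h2 : (0:ℝ) < N ^ (τ1 - 1) := Real.rpow_pos_of_pos hNpos _
    have h3 : (4:ℝ) * 2 ≤ CC * N := mul_le_mul hCC hN2 (by norm_num) (by linarith)
    calc (2:ℝ) * N ^ (τ1 - 1) ≤ 8 * N ^ (τ1 - 1) :=
        mul_le_mul_of_nonneg_right (by norm_num) (le_of_lt h2)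
      _ ≤ (CC * N) * N ^ (τ1 - 1) :=
        mul_le_mul_of_nonneg_right (by clear * - h3; linarith) (le_of_lt h2)
      _ = CC * N ^ τ1 := by rw [h1]; ring
  have hfin : enormZ (rt m) ≤ CC * N ^ τ1 := by
    calc enormZ (rt m) ≤ enormZ m + (d:ℝ) * κ := hrtm
      _ ≤ Real.sqrt d * B + (d:ℝ) * κ := add_le_add_left hEm _
      _ ≤ N ^ (τ1 - 1) + N ^ (τ1 - 1) := add_le_add hfin1 hdκN
      _ = 2 * N ^ (τ1 - 1) := by ring
      _ ≤ CC * N ^ τ1 := hsum2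
  exact absurd hroot (not_lt.mpr hfin)
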